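/- Let N ≥ 1 and let Ω = Metric.ball x₀ R be an open ball in EuclideanSpace ℝ (Fin N) with R > 0. Then there exists a constant c > 0 such that for every φ : EuclideanSpace ℝ (Fin N) → ℝ that is C² on an open set containing the closure of Ω and vanishes at every point of the frontier of Ω, one has ∫_Ω φ(x)² dx ≤ c·∫_Ω (Δφ(x))² dx. -/

import Mathlib

open MeasureTheory

/-- The Laplacian `Δu(x) = ∑ i, ∂²u/∂xᵢ²(x)` of `u : ℝ^N → ℝ`. -/
noncomputable def lap {N : ℕ} (u : EuclideanSpace ℝ (Fin N) → ℝ)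
    (x : EuclideanSpace ℝ (Fin N)) : ℝ :=
  ∑ i : Fin N, fderiv ℝ (fun y => fderiv ℝ u y (EuclideanSpace.single i 1)) x
    (EuclideanSpace.single i 1)


open Set


section OneD
variable {g g' g'' : ℝ → ℝ} {V : Set ℝ} {a b : ℝ}

lemma oneD_ibp (hab : a ≤ b) (hIcc : Icc a b ⊆ V)
    (hg' : ∀ t ∈ V, HasDerivAt g (g' t) t)
    (hg'' : ∀ t ∈ V, HasDerivAt g' (g'' t) t)
    (hc'' : ContinuousOn g'' V)
    (hga : g a = 0) (hgb : g b = 0) :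
    ∫ t in a..b, g t * g'' t = - ∫ t in a..b, (g' t)^2 := by
  have huIcc : Set.uIcc a b ⊆ V := by rw [Set.uIcc_of_le hab]; exact hIcc
  have hcg' : ContinuousOn g' V := fun t ht => (hg'' t ht).continuousAt.continuousWithinAt
  have h1 : IntervalIntegrable g' volume a b := (hcg'.mono huIcc).intervalIntegrable
  have h2 : IntervalIntegrable g'' volume a b := (hc''.mono huIcc).intervalIntegrable
  have h := intervalIntegral.integral_mul_deriv_eq_deriv_mul
    (u := g) (u' := g') (v := g') (v' := g'')
    (fun x hx => hg' x (huIcc hx)) (fun x hx => hg'' x (huIcc hx)) h1 h2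
  rw [hga, hgb] at h
  simp only [zero_mul, sub_zero, zero_sub] at h
  rw [h]
  congr 1
  apply intervalIntegral.integral_congr
  intro x _; ring

lemma oneD_poincare (hab : a ≤ b) (hIcc : Icc a b ⊆ V)
    (hg' : ∀ t ∈ V, HasDerivAt g (g' t) t)
    (hc' : ContinuousOn g' V)
    (hga : g a = 0) :
    ∫ t in a..b, (g t)^2 ≤ 4*(b-a)^2 * ∫ t in a..b, (g' t)^2 := by
  rcases eq_or_lt_of_le hab with rfl | hlt
  · simp
  have huIcc : Set.uIcc a b ⊆ V := by rw [Set.uIcc_of_le hab]; exact hIcc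
  have hcg : ContinuousOn g V := fun t ht => (hg' t ht).continuousAt.continuousWithinAt
  set L : ℝ := b - a with hL
  have hLpos : 0 < L := by simp [hL]; linarith
  set ε : ℝ := 1/(2*L) with hε
  have hεpos : 0 < ε := by positivity
  -- integrands
  set F : ℝ → ℝ := fun t => ε * (g t)^2 + ε⁻¹ * (g' t)^2 with hF
  have hcF : ContinuousOn F V := by
    apply ContinuousOn.add
    · exact continuousOn_const.mul (hcg.pow 2)
    · exact continuousOn_const.mul (hc'.pow 2)
  have hintF : IntervalIntegrable F volume a b := (hcF.mono huIcc).intervalIntegrable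
  have hintg2 : IntervalIntegrable (fun t => (g t)^2) volume a b :=
    ((hcg.pow 2).mono huIcc).intervalIntegrable
  have hintg'2 : IntervalIntegrable (fun t => (g' t)^2) volume a b :=
    ((hc'.pow 2).mono huIcc).intervalIntegrable
  set C : ℝ := ∫ t in a..b, F t with hC
  -- pointwise bound
  have key : ∀ x ∈ Icc a b, (g x)^2 ≤ C := by
    intro x hx
    have hax : a ≤ x := hx.1
    have hxb : x ≤ b := hx.2
    have hsub : Set.uIcc a x ⊆ V := by
      rw [Set.uIcc_of_le hax]
      exact fun t ht => hIcc ⟨ht.1, le_trans ht.2 hxb⟩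
    have hftc : ∫ t in a..x, 2 * g t * g' t = (g x)^2 - (g a)^2 := by
      apply intervalIntegral.integral_eq_sub_of_hasDerivAt
      · intro t ht
        have h1 := (hg' t (hsub ht)).fun_pow 2
        simpa [mul_comm, mul_assoc, mul_left_comm] using h1
      · apply ContinuousOn.intervalIntegrable
        exact (continuousOn_const.mul (hcg.mono hsub)).mul (hc'.mono hsub)
    have hgx : (g x)^2 = ∫ t in a..x, 2 * g t * g' t := by rw [hftc, hga]; ring
    rw [hgx]
    have step1 : ∫ t in a..x, 2 * g t * g' t ≤ ∫ t in a..x, F t := by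
      apply intervalIntegral.integral_mono_on hax
      · apply ContinuousOn.intervalIntegrable
        exact (continuousOn_const.mul (hcg.mono hsub)).mul (hc'.mono hsub)
      · apply ContinuousOn.intervalIntegrable
        exact hcF.mono hsub
      · intro t ht
        have hinv : ε * ε⁻¹ = 1 := mul_inv_cancel₀ (ne_of_gt hεpos)
        have h1 : (0:ℝ) ≤ (ε * g t - g' t)^2 := sq_nonneg _
        have h2 : (0:ℝ) < ε⁻¹ := by positivity
        simp only [hF]
        nlinarith [sq_nonneg (ε * g t - g' t)]
    have step2 : ∫ t in a..x, F t ≤ ∫ t in a..b, F t := by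
      apply intervalIntegral.integral_mono_interval (le_refl a) hax hxb
      · filter_upwards with t
        have : (0:ℝ) ≤ ε⁻¹ := le_of_lt (by positivity)
        simp only [hF]
        positivity
      · exact hintF
    exact le_trans step1 step2
  -- integrate the pointwise bound
  have main : ∫ t in a..b, (g t)^2 ≤ ∫ t in a..b, C := by
    apply intervalIntegral.integral_mono_on hab hintg2 (intervalIntegrable_const)
    exact key
  rw [intervalIntegral.integral_const, smul_eq_mul] at main
  -- compute C
  have hCsplit : C = ε * (∫ t in a..b, (g t)^2) + ε⁻¹ * (∫ t in a..b, (g' t)^2) := by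
    rw [hC]
    rw [intervalIntegral.integral_add (hintg2.const_mul ε) (hintg'2.const_mul ε⁻¹)]
    rw [intervalIntegral.integral_const_mul, intervalIntegral.integral_const_mul]
  set A : ℝ := ∫ t in a..b, (g t)^2
  set B : ℝ := ∫ t in a..b, (g' t)^2
  have hεinv : ε⁻¹ = 2*L := by rw [hε]; field_simp
  clear_value A B C ε
  have : A ≤ L * (ε * A + ε⁻¹ * B) := by rw [← hCsplit]; exact main
  clear hεpos hCsplit hC key main hintF hcF hF
  rw [hεinv, hε] at this
  clear hεinv hε
  clear_value L
  have hLε : L * (1/(2*L)) = 1/2 := by field_simp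
  have expand : L * (1 / (2 * L) * A + 2 * L * B) = (1/2) * A + 2 * L^2 * B := by
    rw [mul_add, ← mul_assoc, hLε]; ring
  rw [expand] at this
  have hfin : A ≤ 4 * L^2 * B := by nlinarith [this]
  simpa [hL] using hfin

end OneD


section Slice
variable {n : ℕ}

noncomputable def pmap (i : Fin (n+1)) (t : ℝ) (y : Fin n → ℝ) :
    EuclideanSpace ℝ (Fin (n+1)) :=
  (MeasurableEquiv.toLp 2 (Fin (n+1) → ℝ)).symm.symm
    ((MeasurableEquiv.piFinSuccAbove (fun _ => ℝ) i).symm (t, y))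

lemma pmap_apply (i : Fin (n+1)) (t : ℝ) (y : Fin n → ℝ) (j : Fin (n+1)) :
    pmap i t y j = Fin.insertNth (α := fun _ => ℝ) i t y j := by
  simp [pmap, MeasurableEquiv.symm_symm, MeasurableEquiv.coe_toLp,
    MeasurableEquiv.piFinSuccAbove_symm_apply, Fin.insertNthEquiv]

lemma pmap_same (i : Fin (n+1)) (t : ℝ) (y : Fin n → ℝ) : pmap i t y i = t := by
  rw [pmap_apply, Fin.insertNth_apply_same]

lemma pmap_succAbove (i : Fin (n+1)) (t : ℝ) (y : Fin n → ℝ) (j : Fin n) :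
    pmap i t y (i.succAbove j) = y j := by
  rw [pmap_apply, Fin.insertNth_apply_succAbove]

lemma pmap_affine (i : Fin (n+1)) (t : ℝ) (y : Fin n → ℝ) :
    pmap i t y = pmap i 0 y + t • EuclideanSpace.single i 1 := by
  apply PiLp.ext
  intro j
  rcases eq_or_ne j i with rfl | hj
  · rw [PiLp.add_apply, PiLp.smul_apply, pmap_same, pmap_same,
      EuclideanSpace.single_apply, if_pos rfl]
    simp
  · obtain ⟨k, rfl⟩ := Fin.exists_succAbove_eq hj
    rw [PiLp.add_apply, PiLp.smul_apply, pmap_succAbove, pmap_succAbove,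
      EuclideanSpace.single_apply, if_neg (Fin.succAbove_ne i k)]
    simp

lemma hasDerivAt_pmap (i : Fin (n+1)) (t : ℝ) (y : Fin n → ℝ) :
    HasDerivAt (fun t => pmap i t y) (EuclideanSpace.single i 1) t := by
  have h : (fun t => pmap i t y)
      = fun t => pmap i 0 y + t • EuclideanSpace.single i 1 :=
    funext fun t => pmap_affine i t y
  rw [h]
  simpa using ((hasDerivAt_id t).smul_const (EuclideanSpace.single i (1:ℝ))).const_add
    (pmap i 0 y)

lemma continuous_pmap (i : Fin (n+1)) (y : Fin n → ℝ) :
    Continuous (fun t => pmap i t y) := by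
  have h : (fun t => pmap i t y)
      = fun t => pmap i 0 y + t • EuclideanSpace.single i 1 :=
    funext fun t => pmap_affine i t y
  rw [h]; fun_prop

/-- sum of squares in the other coordinates -/
noncomputable def dsum (i : Fin (n+1)) (x₀ : EuclideanSpace ℝ (Fin (n+1)))
    (y : Fin n → ℝ) : ℝ := ∑ j, (y j - x₀ (i.succAbove j))^2

lemma dsum_nonneg (i : Fin (n+1)) (x₀ : EuclideanSpace ℝ (Fin (n+1))) (y : Fin n → ℝ) :
    0 ≤ dsum i x₀ y := Finset.sum_nonneg fun j _ => sq_nonneg _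

lemma dist_pmap (i : Fin (n+1)) (x₀ : EuclideanSpace ℝ (Fin (n+1))) (t : ℝ)
    (y : Fin n → ℝ) :
    dist (pmap i t y) x₀ = Real.sqrt ((t - x₀ i)^2 + dsum i x₀ y) := by
  rw [EuclideanSpace.dist_eq]
  congr 1
  rw [Fin.sum_univ_succAbove (fun j => dist (pmap i t y j) (x₀ j) ^ 2) i]
  congr 1
  · rw [pmap_same, Real.dist_eq, sq_abs]
  · exact Finset.sum_congr rfl fun j _ => by rw [pmap_succAbove, Real.dist_eq, sq_abs]

/-- half chord length -/
noncomputable def chordHalf (i : Fin (n+1)) (x₀ : EuclideanSpace ℝ (Fin (n+1))) (R : ℝ)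
    (y : Fin n → ℝ) : ℝ := Real.sqrt (R^2 - dsum i x₀ y)

lemma chordHalf_nonneg (i : Fin (n+1)) (x₀ : EuclideanSpace ℝ (Fin (n+1))) (R : ℝ)
    (y : Fin n → ℝ) : 0 ≤ chordHalf i x₀ R y := Real.sqrt_nonneg _

lemma chordHalf_le (i : Fin (n+1)) (x₀ : EuclideanSpace ℝ (Fin (n+1))) {R : ℝ} (hR : 0 ≤ R)
    (y : Fin n → ℝ) : chordHalf i x₀ R y ≤ R := by
  rw [chordHalf]
  calc Real.sqrt (R^2 - dsum i x₀ y) ≤ Real.sqrt (R^2) :=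
        Real.sqrt_le_sqrt (by have := dsum_nonneg i x₀ y; linarith)
    _ = R := by rw [Real.sqrt_sq hR]

lemma pmap_mem_ball_iff (i : Fin (n+1)) (x₀ : EuclideanSpace ℝ (Fin (n+1))) {R : ℝ}
    (hR : 0 < R) (t : ℝ) (y : Fin n → ℝ) :
    pmap i t y ∈ Metric.ball x₀ R ↔
      t ∈ Set.Ioo (x₀ i - chordHalf i x₀ R y) (x₀ i + chordHalf i x₀ R y) := by
  rw [Metric.mem_ball, dist_pmap, Real.sqrt_lt' hR]
  have h2 := Real.lt_sqrt (abs_nonneg (t - x₀ i)) (y := R^2 - dsum i x₀ y)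
  rw [sq_abs] at h2
  have h1 : (t - x₀ i)^2 + dsum i x₀ y < R^2 ↔ |t - x₀ i| < chordHalf i x₀ R y := by
    rw [chordHalf]
    constructor
    · intro h; exact h2.mpr (by linarith)
    · intro h; have := h2.mp h; linarith
  rw [h1, Set.mem_Ioo, abs_lt]
  constructor
  · rintro ⟨u, v⟩; exact ⟨by linarith, by linarith⟩
  · rintro ⟨u, v⟩; exact ⟨by linarith, by linarith⟩


lemma pmap_mem_closedBall (i : Fin (n+1)) (x₀ : EuclideanSpace ℝ (Fin (n+1))) {R : ℝ}
    (hR : 0 ≤ R) {t : ℝ} {y : Fin n → ℝ}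
    (h : (t - x₀ i)^2 + dsum i x₀ y ≤ R^2) :
    pmap i t y ∈ Metric.closedBall x₀ R := by
  rw [Metric.mem_closedBall, dist_pmap]
  calc Real.sqrt ((t - x₀ i)^2 + dsum i x₀ y) ≤ Real.sqrt (R^2) := Real.sqrt_le_sqrt h
    _ = R := Real.sqrt_sq hR

lemma pmap_mem_sphere (i : Fin (n+1)) (x₀ : EuclideanSpace ℝ (Fin (n+1))) {R : ℝ}
    (hR : 0 ≤ R) {t : ℝ} {y : Fin n → ℝ}
    (h : (t - x₀ i)^2 + dsum i x₀ y = R^2) :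
    pmap i t y ∈ Metric.sphere x₀ R := by
  rw [Metric.mem_sphere, dist_pmap, h, Real.sqrt_sq hR]

lemma slice_integral (i : Fin (n+1)) (x₀ : EuclideanSpace ℝ (Fin (n+1))) {R : ℝ}
    (hR : 0 < R) (F : EuclideanSpace ℝ (Fin (n+1)) → ℝ)
    (hF : IntegrableOn F (Metric.ball x₀ R)) :
    ∫ x in Metric.ball x₀ R, F x
      = ∫ y : Fin n → ℝ,
          ∫ t in (x₀ i - chordHalf i x₀ R y)..(x₀ i + chordHalf i x₀ R y),
            F (pmap i t y) := by
  have hmeas : MeasurableSet (Metric.ball x₀ R) := measurableSet_ball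
  set e : EuclideanSpace ℝ (Fin (n+1)) ≃ᵐ (ℝ × (Fin n → ℝ)) :=
    (MeasurableEquiv.toLp 2 (Fin (n+1) → ℝ)).symm.trans
      (MeasurableEquiv.piFinSuccAbove (fun _ => ℝ) i) with he
  have mp : MeasurePreserving e :=
    (volume_preserving_piFinSuccAbove (fun _ : Fin (n+1) => ℝ) i).comp
      (EuclideanSpace.volume_preserving_symm_measurableEquiv_toLp (Fin (n+1)))
  have hesymm : ∀ (t : ℝ) (y : Fin n → ℝ), e.symm (t, y) = pmap i t y := fun t y => rfl
  have hInd : Integrable ((Metric.ball x₀ R).indicator F) volume :=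
    (integrable_indicator_iff hmeas).2 hF
  have h1 : ∫ x in Metric.ball x₀ R, F x = ∫ x, (Metric.ball x₀ R).indicator F x :=
    (integral_indicator hmeas).symm
  have h2 : ∫ x, (Metric.ball x₀ R).indicator F x
      = ∫ z : ℝ × (Fin n → ℝ), (Metric.ball x₀ R).indicator F (e.symm z) :=
    ((mp.symm e).integral_comp' _).symm
  have hG : Integrable (fun z : ℝ × (Fin n → ℝ) => (Metric.ball x₀ R).indicator F (e.symm z))
      volume := ((mp.symm e).integrable_comp_emb e.symm.measurableEmbedding).2 hInd
  rw [h1, h2]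
  rw [MeasureTheory.Measure.volume_eq_prod] at hG
  rw [show (volume : Measure (ℝ × (Fin n → ℝ))) = (volume : Measure ℝ).prod volume from
    MeasureTheory.Measure.volume_eq_prod ℝ (Fin n → ℝ)]
  rw [integral_prod_symm _ hG]
  refine integral_congr_ae (Filter.Eventually.of_forall fun y => ?_)
  have hab : x₀ i - chordHalf i x₀ R y ≤ x₀ i + chordHalf i x₀ R y := by
    linarith [chordHalf_nonneg i x₀ R y]
  have hset : ∀ t : ℝ, (Metric.ball x₀ R).indicator F (pmap i t y)
      = (Set.Ioo (x₀ i - chordHalf i x₀ R y) (x₀ i + chordHalf i x₀ R y)).indicator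
          (fun t => F (pmap i t y)) t := by
    intro t
    by_cases h : pmap i t y ∈ Metric.ball x₀ R
    · rw [Set.indicator_of_mem h, Set.indicator_of_mem ((pmap_mem_ball_iff i x₀ hR t y).1 h)]
    · rw [Set.indicator_of_notMem h, Set.indicator_of_notMem
        (fun hm => h ((pmap_mem_ball_iff i x₀ hR t y).2 hm))]
  simp_rw [hesymm, hset]
  rw [integral_indicator measurableSet_Ioo, ← integral_Ioc_eq_integral_Ioo,
    ← intervalIntegral.integral_of_le hab]

end Slice

noncomputable def psi1 (n : ℕ) (φ : EuclideanSpace ℝ (Fin (n+1)) → ℝ) (i : Fin (n+1))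
    (x : EuclideanSpace ℝ (Fin (n+1))) : ℝ := fderiv ℝ φ x (EuclideanSpace.single i 1)

noncomputable def psi2 (n : ℕ) (φ : EuclideanSpace ℝ (Fin (n+1)) → ℝ) (i : Fin (n+1))
    (x : EuclideanSpace ℝ (Fin (n+1))) : ℝ :=
  fderiv ℝ (psi1 n φ i) x (EuclideanSpace.single i 1)

lemma lap_eq_sum {n : ℕ} (φ : EuclideanSpace ℝ (Fin (n+1)) → ℝ)
    (x : EuclideanSpace ℝ (Fin (n+1))) : lap φ x = ∑ i, psi2 n φ i x := rfl

theorem stmt_15 (N : ℕ) (hN : 1 ≤ N) (x₀ : EuclideanSpace ℝ (Fin N)) (R : ℝ)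
    (hR : 0 < R) (Ω : Set (EuclideanSpace ℝ (Fin N)))
    (hΩ : Ω = Metric.ball x₀ R) :
    ∃ c : ℝ, 0 < c ∧
      ∀ φ : EuclideanSpace ℝ (Fin N) → ℝ,
        (∃ U : Set (EuclideanSpace ℝ (Fin N)),
          IsOpen U ∧ closure Ω ⊆ U ∧ ContDiffOn ℝ 2 φ U) →
        (∀ x ∈ frontier Ω, φ x = 0) →
        ∫ x in Ω, φ x ^ 2 ≤ c * ∫ x in Ω, (lap φ x) ^ 2 := by
  subst hΩ
  obtain ⟨n, rfl⟩ : ∃ n, N = n + 1 := ⟨N - 1, by omega⟩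
  refine ⟨256 * R^4, by positivity, ?_⟩
  rintro φ ⟨U, hUopen, hUsub, hφ⟩ hbdry
  have hRne : R ≠ 0 := ne_of_gt hR
  have hsubU : Metric.closedBall x₀ R ⊆ U := by
    rw [← closure_ball x₀ hRne]; exact hUsub
  have hfront : ∀ x ∈ Metric.sphere x₀ R, φ x = 0 := fun x hx =>
    hbdry x (by rw [frontier_ball x₀ hRne]; exact hx)
  -- smoothness facts
  have hφc : ContinuousOn φ U := hφ.continuousOn
  have hfd : ContDiffOn ℝ 1 (fderiv ℝ φ) U := hφ.fderiv_of_isOpen hUopen (by norm_num)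
  have hψ : ∀ i, ContDiffOn ℝ 1 (psi1 n φ i) U := fun i =>
    (ContinuousLinearMap.apply ℝ ℝ (EuclideanSpace.single i (1:ℝ))).contDiff.comp_contDiffOn hfd
  have hψc : ∀ i, ContinuousOn (psi1 n φ i) U := fun i => (hψ i).continuousOn
  have hψ'c : ∀ i, ContinuousOn (psi2 n φ i) U := fun i =>
    (ContinuousLinearMap.apply ℝ ℝ (EuclideanSpace.single i (1:ℝ))).continuous.comp_continuousOn
      ((hψ i).continuousOn_fderiv_of_isOpen hUopen le_rfl)
  have hlapc : ContinuousOn (lap φ) U := by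
    have h : lap φ = fun x => ∑ i, psi2 n φ i x := funext fun x => lap_eq_sum φ x
    rw [h]
    exact continuousOn_finset_sum _ fun i _ => hψ'c i
  have hφd : ∀ x ∈ U, HasFDerivAt φ (fderiv ℝ φ x) x := fun x hx =>
    ((hφ.differentiableOn (by norm_num)).differentiableAt (hUopen.mem_nhds hx)).hasFDerivAt
  have hψd : ∀ i, ∀ x ∈ U, HasFDerivAt (psi1 n φ i) (fderiv ℝ (psi1 n φ i) x) x :=
    fun i x hx =>
      (((hψ i).differentiableOn one_ne_zero).differentiableAt (hUopen.mem_nhds hx)).hasFDerivAt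
  -- integrability machine
  have hInt : ∀ {H : EuclideanSpace ℝ (Fin (n+1)) → ℝ}, ContinuousOn H U →
      IntegrableOn H (Metric.ball x₀ R) := fun {H} hH =>
    ((hH.mono hsubU).integrableOn_compact (isCompact_closedBall _ _)).mono_set
      Metric.ball_subset_closedBall
  -- Green identity for each direction
  have hGi : ∀ i, (∫ x in Metric.ball x₀ R,
      (φ x * psi2 n φ i x + (psi1 n φ i x)^2)) = 0 := by
    intro i
    have hcontF : ContinuousOn (fun x => φ x * psi2 n φ i x + (psi1 n φ i x)^2) U :=
      (hφc.mul (hψ'c i)).add ((hψc i).pow 2)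
    rw [slice_integral i x₀ hR _ (hInt hcontF)]
    have hzero : ∀ y : Fin n → ℝ,
        (∫ t in (x₀ i - chordHalf i x₀ R y)..(x₀ i + chordHalf i x₀ R y),
          (fun x => φ x * psi2 n φ i x + (psi1 n φ i x)^2) (pmap i t y)) = (0:ℝ) := by
      intro y
      rcases eq_or_lt_of_le (chordHalf_nonneg i x₀ R y) with hs | hs
      · rw [← hs, sub_zero, add_zero, intervalIntegral.integral_same]
      · set s := chordHalf i x₀ R y with hsdef
        set a := x₀ i - s with hadef
        set b := x₀ i + s with hbdef
        have hdlt : 0 < R^2 - dsum i x₀ y := Real.sqrt_pos.mp hs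
        have hs2 : s^2 = R^2 - dsum i x₀ y := Real.sq_sqrt (le_of_lt hdlt)
        have hab : a ≤ b := by rw [hadef, hbdef]; linarith [hs.le]
        set V : Set ℝ := {t | pmap i t y ∈ U} with hVdef
        have hVopen : IsOpen V := hUopen.preimage (continuous_pmap i y)
        have hIccV : Set.Icc a b ⊆ V := by
          intro t ht
          have h1 : (t - x₀ i)^2 + dsum i x₀ y ≤ R^2 := by
            have h2 := ht.1
            have h3 := ht.2
            rw [hadef] at h2; rw [hbdef] at h3
            nlinarith
          exact hsubU (pmap_mem_closedBall i x₀ hR.le h1)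
        have hg' : ∀ t ∈ V, HasDerivAt (fun t => φ (pmap i t y))
            (psi1 n φ i (pmap i t y)) t := fun t ht =>
          (hφd _ ht).comp_hasDerivAt t (hasDerivAt_pmap i t y)
        have hg'' : ∀ t ∈ V, HasDerivAt (fun t => psi1 n φ i (pmap i t y))
            (psi2 n φ i (pmap i t y)) t := fun t ht =>
          HasFDerivAt.comp_hasDerivAt (l := psi1 n φ i) t ((hψd i) _ ht) (hasDerivAt_pmap i t y)
        have hc'' : ContinuousOn (fun t => psi2 n φ i (pmap i t y)) V :=
          (hψ'c i).comp (continuous_pmap i y).continuousOn (fun t ht => ht)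
        have hc' : ContinuousOn (fun t => psi1 n φ i (pmap i t y)) V :=
          (hψc i).comp (continuous_pmap i y).continuousOn (fun t ht => ht)
        have hcφ : ContinuousOn (fun t => φ (pmap i t y)) V :=
          hφc.comp (continuous_pmap i y).continuousOn (fun t ht => ht)
        have hga : φ (pmap i a y) = 0 := by
          refine hfront _ (pmap_mem_sphere i x₀ hR.le ?_)
          have h4 : (a - x₀ i)^2 = s^2 := by rw [hadef]; ring
          rw [h4, hs2]; ring
        have hgb : φ (pmap i b y) = 0 := by
          refine hfront _ (pmap_mem_sphere i x₀ hR.le ?_)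
          have h4 : (b - x₀ i)^2 = s^2 := by rw [hbdef]; ring
          rw [h4, hs2]; ring
        have hibp := oneD_ibp hab hIccV hg' hg'' hc'' hga hgb
        have huIcc : Set.uIcc a b ⊆ V := by rw [Set.uIcc_of_le hab]; exact hIccV
        have hint1 : IntervalIntegrable
            (fun t => φ (pmap i t y) * psi2 n φ i (pmap i t y)) volume a b :=
          ((hcφ.mono huIcc).mul (hc''.mono huIcc)).intervalIntegrable
        have hint2 : IntervalIntegrable
            (fun t => (psi1 n φ i (pmap i t y))^2) volume a b :=
          ((hc'.mono huIcc).pow 2).intervalIntegrable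
        show (∫ t in a..b, (φ (pmap i t y) * psi2 n φ i (pmap i t y)
            + (psi1 n φ i (pmap i t y))^2)) = (0:ℝ)
        rw [intervalIntegral.integral_add hint1 hint2, hibp]
        ring
    have h5 : (∫ y : Fin n → ℝ,
        ∫ t in (x₀ i - chordHalf i x₀ R y)..(x₀ i + chordHalf i x₀ R y),
          (fun x => φ x * psi2 n φ i x + (psi1 n φ i x)^2) (pmap i t y))
        = ∫ _y : Fin n → ℝ, (0:ℝ) :=
      integral_congr_ae (Filter.Eventually.of_forall hzero)
    rw [h5, integral_zero]
  -- Poincaré in direction 0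
  have hcontG : ContinuousOn (fun x => 16*R^2*(psi1 n φ 0 x)^2 - (φ x)^2) U :=
    (continuousOn_const.mul ((hψc 0).pow 2)).sub (hφc.pow 2)
  have hP : 0 ≤ ∫ x in Metric.ball x₀ R, (16*R^2*(psi1 n φ 0 x)^2 - (φ x)^2) := by
    rw [slice_integral 0 x₀ hR _ (hInt hcontG)]
    apply integral_nonneg
    intro y
    simp only [Pi.zero_apply]
    rcases eq_or_lt_of_le (chordHalf_nonneg 0 x₀ R y) with hs | hs
    · rw [← hs, sub_zero, add_zero, intervalIntegral.integral_same]
    · set s := chordHalf 0 x₀ R y with hsdef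
      set a := x₀ 0 - s with hadef
      set b := x₀ 0 + s with hbdef
      have hdlt : 0 < R^2 - dsum 0 x₀ y := Real.sqrt_pos.mp hs
      have hs2 : s^2 = R^2 - dsum 0 x₀ y := Real.sq_sqrt (le_of_lt hdlt)
      have hab : a ≤ b := by rw [hadef, hbdef]; linarith [hs.le]
      set V : Set ℝ := {t | pmap 0 t y ∈ U} with hVdef
      have hVopen : IsOpen V := hUopen.preimage (continuous_pmap 0 y)
      have hIccV : Set.Icc a b ⊆ V := by
        intro t ht
        have h1 : (t - x₀ 0)^2 + dsum 0 x₀ y ≤ R^2 := by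
          have h2 := ht.1
          have h3 := ht.2
          rw [hadef] at h2; rw [hbdef] at h3
          nlinarith
        exact hsubU (pmap_mem_closedBall 0 x₀ hR.le h1)
      have hg' : ∀ t ∈ V, HasDerivAt (fun t => φ (pmap 0 t y))
          (psi1 n φ 0 (pmap 0 t y)) t := fun t ht =>
        (hφd _ ht).comp_hasDerivAt t (hasDerivAt_pmap 0 t y)
      have hc' : ContinuousOn (fun t => psi1 n φ 0 (pmap 0 t y)) V :=
        (hψc 0).comp (continuous_pmap 0 y).continuousOn (fun t ht => ht)
      have hcφ : ContinuousOn (fun t => φ (pmap 0 t y)) V :=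
        hφc.comp (continuous_pmap 0 y).continuousOn (fun t ht => ht)
      have hga : φ (pmap 0 a y) = 0 := by
        refine hfront _ (pmap_mem_sphere 0 x₀ hR.le ?_)
        have h4 : (a - x₀ 0)^2 = s^2 := by rw [hadef]; ring
        rw [h4, hs2]; ring
      have hpoin := oneD_poincare hab hIccV hg' hc' hga
      have huIcc : Set.uIcc a b ⊆ V := by rw [Set.uIcc_of_le hab]; exact hIccV
      have hintφ2 : IntervalIntegrable (fun t => (φ (pmap 0 t y))^2) volume a b :=
        ((hcφ.mono huIcc).pow 2).intervalIntegrable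
      have hintψ2 : IntervalIntegrable (fun t => (psi1 n φ 0 (pmap 0 t y))^2) volume a b :=
        ((hc'.mono huIcc).pow 2).intervalIntegrable
      have hg'2nonneg : 0 ≤ ∫ t in a..b, (psi1 n φ 0 (pmap 0 t y))^2 :=
        intervalIntegral.integral_nonneg hab (fun u _ => sq_nonneg _)
      have hsplit : (∫ t in a..b,
          (fun x => 16*R^2*(psi1 n φ 0 x)^2 - (φ x)^2) (pmap 0 t y))
          = 16*R^2*(∫ t in a..b, (psi1 n φ 0 (pmap 0 t y))^2)
            - ∫ t in a..b, (φ (pmap 0 t y))^2 := by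
        show (∫ t in a..b, (16*R^2*(psi1 n φ 0 (pmap 0 t y))^2 - (φ (pmap 0 t y))^2)) = _
        rw [intervalIntegral.integral_sub (hintψ2.const_mul _) hintφ2,
          intervalIntegral.integral_const_mul]
      rw [hsplit]
      have hba : b - a = 2*s := by rw [hadef, hbdef]; ring
      rw [hba] at hpoin
      have hsR : s ≤ R := chordHalf_le 0 x₀ hR.le y
      have hss : s^2 ≤ R^2 := by nlinarith [hs.le]
      have h6 : 4*(2*s)^2*(∫ t in a..b, (psi1 n φ 0 (pmap 0 t y))^2)
          ≤ 16*R^2*(∫ t in a..b, (psi1 n φ 0 (pmap 0 t y))^2) := by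
        nlinarith [hg'2nonneg]
      linarith
  -- global integrabilities
  have hIφ2 : IntegrableOn (fun x => (φ x)^2) (Metric.ball x₀ R) := hInt (hφc.pow 2)
  have hIψ2 : ∀ i, IntegrableOn (fun x => (psi1 n φ i x)^2) (Metric.ball x₀ R) :=
    fun i => hInt ((hψc i).pow 2)
  have hIφψ' : ∀ i, IntegrableOn (fun x => φ x * psi2 n φ i x) (Metric.ball x₀ R) :=
    fun i => hInt (hφc.mul (hψ'c i))
  have hIlap2 : IntegrableOn (fun x => (lap φ x)^2) (Metric.ball x₀ R) := hInt (hlapc.pow 2)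
  have hIφlap : IntegrableOn (fun x => φ x * lap φ x) (Metric.ball x₀ R) :=
    hInt (hφc.mul hlapc)
  -- extract Poincaré inequality
  have hP2 : (∫ x in Metric.ball x₀ R, (φ x)^2)
      ≤ 16*R^2 * ∫ x in Metric.ball x₀ R, (psi1 n φ 0 x)^2 := by
    have hsplit : ∫ x in Metric.ball x₀ R, (16*R^2*(psi1 n φ 0 x)^2 - (φ x)^2)
        = 16*R^2*(∫ x in Metric.ball x₀ R, (psi1 n φ 0 x)^2)
          - ∫ x in Metric.ball x₀ R, (φ x)^2 := by
      rw [integral_sub ((hIψ2 0).const_mul _) hIφ2, integral_const_mul _ _]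
    rw [hsplit] at hP
    linarith
  -- Green: sum over directions
  have hGsum : (∑ i, ∫ x in Metric.ball x₀ R, (psi1 n φ i x)^2)
      = -∫ x in Metric.ball x₀ R, φ x * lap φ x := by
    have h1 : ∀ i, (∫ x in Metric.ball x₀ R, (psi1 n φ i x)^2)
        = -∫ x in Metric.ball x₀ R, φ x * psi2 n φ i x := by
      intro i
      have h2 := hGi i
      rw [integral_add (hIφψ' i) (hIψ2 i)] at h2
      linarith
    rw [Finset.sum_congr rfl (fun i _ => h1 i), Finset.sum_neg_distrib]
    congr 1
    rw [← integral_finset_sum _ (fun i _ => hIφψ' i)]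
    congr 1
    funext x
    rw [← Finset.mul_sum, ← lap_eq_sum φ x]
  have hψ0S : (∫ x in Metric.ball x₀ R, (psi1 n φ 0 x)^2)
      ≤ ∑ i, ∫ x in Metric.ball x₀ R, (psi1 n φ i x)^2 :=
    Finset.single_le_sum
      (fun i _ => setIntegral_nonneg measurableSet_ball fun x _ => sq_nonneg _)
      (Finset.mem_univ 0)
  have hmul : 16*R^2*(∫ x in Metric.ball x₀ R, (psi1 n φ 0 x)^2)
      ≤ 16*R^2*(∑ i, ∫ x in Metric.ball x₀ R, (psi1 n φ i x)^2) :=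
    mul_le_mul_of_nonneg_left hψ0S (by positivity)
  rw [hGsum] at hmul
  -- final pointwise AM-GM
  have hpos : 0 ≤ ∫ x in Metric.ball x₀ R,
      ((1/2)*(φ x)^2 + 128*R^4*(lap φ x)^2 + 16*R^2*(φ x * lap φ x)) :=
    setIntegral_nonneg measurableSet_ball (fun x _ => by
      nlinarith [sq_nonneg (φ x + 16*R^2*lap φ x), sq_nonneg R, hR, sq_nonneg (R^2)])
  have hIa : IntegrableOn (fun x => (1/2)*(φ x)^2 + 128*R^4*(lap φ x)^2)
      (Metric.ball x₀ R) :=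
    hInt ((continuousOn_const.mul (hφc.pow 2)).add (continuousOn_const.mul (hlapc.pow 2)))
  have hIb : IntegrableOn (fun x => 16*R^2*(φ x * lap φ x)) (Metric.ball x₀ R) :=
    hInt (continuousOn_const.mul (hφc.mul hlapc))
  have hIc : IntegrableOn (fun x => (1/2)*(φ x)^2) (Metric.ball x₀ R) :=
    hInt (continuousOn_const.mul (hφc.pow 2))
  have hId : IntegrableOn (fun x => 128*R^4*(lap φ x)^2) (Metric.ball x₀ R) :=
    hInt (continuousOn_const.mul (hlapc.pow 2))
  have hsplit2 := integral_add (μ := volume.restrict (Metric.ball x₀ R)) hIa hIb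
  rw [integral_add hIc hId, integral_const_mul, integral_const_mul, integral_const_mul] at hsplit2
  rw [hsplit2] at hpos
  have goal2 : (∫ x in Metric.ball x₀ R, (φ x)^2)
      ≤ 256*R^4 * ∫ x in Metric.ball x₀ R, (lap φ x)^2 := by
    nlinarith [hP2, hmul, hpos]
  calc ∫ x in Metric.ball x₀ R, φ x ^ 2
      ≤ 256*R^4 * ∫ x in Metric.ball x₀ R, (lap φ x)^2 := goal2
    _ = 256 * R ^ 4 * ∫ x in Metric.ball x₀ R, (lap φ x) ^ 2 := by ring
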